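/- Suppose ᾱ = π (degenerate case), but the tuples can be partitioned into two strata S₁ and S₂ with effective rates ᾱ₁ ≠ ᾱ₂ and, for each stratum i, ᾱᵢ ≠ π or the pair (ᾱ₁, ᾱ₂) with the two stratum-level tuple expectations T₁(g), T₂(g) determines (R₊(g), R₋(g)). Concretely: if ᾱ₁ ≠ ᾱ₂, then the 2×2 system [[ᾱ₁, 1−ᾱ₁],[ᾱ₂, 1−ᾱ₂]]·[R₊, R₋]ᵀ = [T₁, T₂]ᵀ is invertible, so R₊ and R₋ (and hence the risk R(g) = π R₊ + (1−π) R₋) are identified from stratum-level tuple observables alone. -/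

import Mathlib

/-- Stratify-and-solve identifiability in the degenerate case
`ᾱ = π`.  If the tuples split into two strata with effective rates
`ᾱ₁ ≠ ᾱ₂` and stratum-level expectations `Tᵢ = ᾱᵢR₊ + (1−ᾱᵢ)R₋`, then the
stratified 2×2 system is invertible (determinant `ᾱ₁ − ᾱ₂ ≠ 0`), so
`R₊`, `R₋` — and hence the risk `R = πR₊ + (1−π)R₋` — are identified from
stratum-level tuple observables alone. -/
theorem ntmp_stratify_and_solve
    (αbar π α1 α2 : ℝ) (hdeg : αbar = π)
    (hα1 : α1 ∈ Set.Ioo (0 : ℝ) 1) (hα2 : α2 ∈ Set.Ioo (0 : ℝ) 1)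
    (hπ : π ∈ Set.Ioo (0 : ℝ) 1) (hne : α1 ≠ α2)
    (Rpos Rneg T1 T2 : ℝ)
    (hT1 : T1 = α1 * Rpos + (1 - α1) * Rneg)
    (hT2 : T2 = α2 * Rpos + (1 - α2) * Rneg) :
    IsUnit (Matrix.of ![![α1, 1 - α1], ![α2, 1 - α2]]) ∧
    Rpos = ((1 - α2) * T1 - (1 - α1) * T2) / (α1 - α2) ∧
    Rneg = (α1 * T2 - α2 * T1) / (α1 - α2) ∧
    π * Rpos + (1 - π) * Rneg =
      π * (((1 - α2) * T1 - (1 - α1) * T2) / (α1 - α2))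
        + (1 - π) * ((α1 * T2 - α2 * T1) / (α1 - α2)) ∧
    (∀ Rpos' Rneg' : ℝ,
      T1 = α1 * Rpos' + (1 - α1) * Rneg' →
      T2 = α2 * Rpos' + (1 - α2) * Rneg' →
      Rpos' = Rpos ∧ Rneg' = Rneg) := by
  have hd : α1 - α2 ≠ 0 := sub_ne_zero.mpr hne
  have hRpos : Rpos = ((1 - α2) * T1 - (1 - α1) * T2) / (α1 - α2) := by
    field_simp [hT1, hT2]; rw [hT1, hT2]; ring
  have hRneg : Rneg = (α1 * T2 - α2 * T1) / (α1 - α2) := by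
    field_simp [hT1, hT2]; rw [hT1, hT2]; ring
  refine ⟨?_, hRpos, hRneg, by rw [hRpos, hRneg], ?_⟩
  · rw [Matrix.isUnit_iff_isUnit_det, Matrix.det_fin_two]
    simp only [Matrix.of_apply, Matrix.cons_val', Matrix.cons_val_zero, Matrix.cons_val_one,
      Matrix.head_cons, Matrix.empty_val', Matrix.cons_val_fin_one, Matrix.head_fin_const]
    have : α1 * (1 - α2) - (1 - α1) * α2 = α1 - α2 := by ring
    rw [this]
    exact isUnit_iff_ne_zero.mpr hd
  · intro Rpos' Rneg' h1 h2
    have e1 : α1 * (Rpos' - Rpos) + (1 - α1) * (Rneg' - Rneg) = 0 := by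
      rw [hT1] at h1; linarith [h1]
    have e2 : α2 * (Rpos' - Rpos) + (1 - α2) * (Rneg' - Rneg) = 0 := by
      rw [hT2] at h2; linarith [h2]
    have hp : Rpos' - Rpos = 0 := by
      have : (α1 - α2) * (Rpos' - Rpos) = 0 := by
        linear_combination (1 - α2) * e1 - (1 - α1) * e2
      exact (mul_eq_zero.mp this).resolve_left hd
    have hn : Rneg' - Rneg = 0 := by
      have : (α1 - α2) * (Rneg' - Rneg) = 0 := by
        linear_combination α1 * e2 - α2 * e1
      exact (mul_eq_zero.mp this).resolve_left hd
    constructor <;> linarith
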